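/- For any complex r with Re(r) > 0, the logarithmic derivative identity holds: d/dα [ ∏_p (1 - p^{-(1+α+γ)} + p^{-(1+2γ)}) ] evaluated at α = γ = r equals ∑_p (log p)/p^{1+2r}, where the product and sum run over all primes and converge absolutely. -/

import Mathlib

open Complex Filter

namespace DLEPaux

/-- The Euler factor. -/
noncomputable def F (r : ℂ) (p : Nat.Primes) (α : ℂ) : ℂ :=
  1 - ((p : ℕ) : ℂ) ^ (-(1 + α + r)) + ((p : ℕ) : ℂ) ^ (-(1 + 2 * r))

lemma two_le_p (p : Nat.Primes) : (2 : ℝ) ≤ ((p : ℕ) : ℝ) := by exact_mod_cast p.prop.two_le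

lemma p_pos (p : Nat.Primes) : (0 : ℝ) < ((p : ℕ) : ℝ) := lt_of_lt_of_le two_pos (two_le_p p)

lemma summable_rpow_primes {x : ℝ} (hx : 1 < x) :
    Summable fun p : Nat.Primes => ((p : ℕ) : ℝ) ^ (-x) :=
  Nat.Primes.summable_rpow.mpr (by linarith)

lemma summable_log_mul_rpow {x : ℝ} (hx : 1 < x) :
    Summable fun p : Nat.Primes => Real.log ((p : ℕ) : ℝ) * ((p : ℕ) : ℝ) ^ (-x) := by
  have hε : (0 : ℝ) < (x - 1) / 2 := by linarith
  have h1 : (1 : ℝ) < (x + 1) / 2 := by linarith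
  refine ((summable_rpow_primes h1).mul_left (((x - 1) / 2)⁻¹)).of_nonneg_of_le
    (fun p => mul_nonneg (Real.log_natCast_nonneg _) (Real.rpow_nonneg (p_pos p).le _))
    (fun p => ?_)
  have hp := p_pos p
  calc Real.log ((p : ℕ) : ℝ) * ((p : ℕ) : ℝ) ^ (-x)
      ≤ (((p : ℕ) : ℝ) ^ ((x - 1) / 2) / ((x - 1) / 2)) * ((p : ℕ) : ℝ) ^ (-x) :=
        mul_le_mul_of_nonneg_right (Real.log_le_rpow_div hp.le hε) (Real.rpow_nonneg hp.le _)
    _ = ((x - 1) / 2)⁻¹ * (((p : ℕ) : ℝ) ^ ((x - 1) / 2) * ((p : ℕ) : ℝ) ^ (-x)) := by ring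
    _ = ((x - 1) / 2)⁻¹ * ((p : ℕ) : ℝ) ^ ((x - 1) / 2 + -x) := by
        rw [Real.rpow_add hp]
    _ = ((x - 1) / 2)⁻¹ * ((p : ℕ) : ℝ) ^ (-((x + 1) / 2)) := by
        rw [show (x - 1) / 2 + -x = -((x + 1) / 2) by ring]

lemma norm_p_cpow (p : Nat.Primes) (w : ℂ) :
    ‖((p : ℕ) : ℂ) ^ (-w)‖ = ((p : ℕ) : ℝ) ^ (-w.re) := by
  rw [norm_natCast_cpow_of_pos p.prop.pos, neg_re]

lemma norm_log_p (p : Nat.Primes) :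
    ‖Complex.log ((p : ℕ) : ℂ)‖ = Real.log ((p : ℕ) : ℝ) := by
  rw [← Complex.natCast_log, Complex.norm_real, Real.norm_eq_abs,
    _root_.abs_of_nonneg (Real.log_natCast_nonneg _)]

section main

variable {r : ℂ} (hr : 0 < r.re)

lemma norm_F_sub_one_le (p : Nat.Primes) (α : ℂ) :
    ‖F r p α - 1‖ ≤ ((p : ℕ) : ℝ) ^ (-(1 + 2 * r.re)) + ((p : ℕ) : ℝ) ^ (-(1 + α.re + r.re)) := by
  have h : F r p α - 1 = ((p : ℕ) : ℂ) ^ (-(1 + 2 * r)) - ((p : ℕ) : ℂ) ^ (-(1 + α + r)) := by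
    rw [F]; ring
  rw [h]
  refine (norm_sub_le _ _).trans ?_
  rw [norm_p_cpow, norm_p_cpow]
  apply add_le_add <;> apply le_of_eq <;> congr 1 <;> simp <;> ring

lemma rpow_le_two_rpow (p : Nat.Primes) {e x : ℝ} (he : 0 ≤ e) (hx : e ≤ x) :
    ((p : ℕ) : ℝ) ^ (-x) ≤ (2 : ℝ) ^ (-e) := by
  calc ((p : ℕ) : ℝ) ^ (-x) ≤ ((p : ℕ) : ℝ) ^ (-e) :=
        Real.rpow_le_rpow_of_exponent_le (by linarith [two_le_p p]) (by linarith)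
    _ ≤ (2 : ℝ) ^ (-e) := by
        rw [Real.rpow_neg (p_pos p).le, Real.rpow_neg (by norm_num : (0:ℝ) ≤ 2)]
        exact inv_anti₀ (Real.rpow_pos_of_pos two_pos _)
          (Real.rpow_le_rpow (by norm_num) (two_le_p p) he)

include hr in
lemma norm_F_sub_one_lt (p : Nat.Primes) {α : ℂ} (hα : 0 < α.re) :
    ‖F r p α - 1‖ ≤ (2 : ℝ) ^ (-r.re) := by
  refine (norm_F_sub_one_le p α).trans ?_
  have h1 : ((p : ℕ) : ℝ) ^ (-(1 + 2 * r.re)) ≤ (2 : ℝ) ^ (-(1 + r.re)) :=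
    rpow_le_two_rpow p (by linarith) (by linarith)
  have h2 : ((p : ℕ) : ℝ) ^ (-(1 + α.re + r.re)) ≤ (2 : ℝ) ^ (-(1 + r.re)) :=
    rpow_le_two_rpow p (by linarith) (by linarith)
  have h3 : (2 : ℝ) ^ (-(1 + r.re)) + (2 : ℝ) ^ (-(1 + r.re)) = (2 : ℝ) ^ (-r.re) := by
    rw [show -(1 + r.re) = (-1) + (-r.re) by ring, Real.rpow_add two_pos,
      Real.rpow_neg_one]
    ring
  linarith

include hr in
lemma eps_lt_one : (2 : ℝ) ^ (-r.re) < 1 :=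
  Real.rpow_lt_one_of_one_lt_of_neg one_lt_two (by linarith)

lemma eps_pos : (0 : ℝ) < (2 : ℝ) ^ (-r.re) := Real.rpow_pos_of_pos two_pos _

include hr in
lemma F_ne_zero (p : Nat.Primes) {α : ℂ} (hα : 0 < α.re) : F r p α ≠ 0 := by
  intro h
  have h1 := norm_F_sub_one_lt hr p hα
  rw [h] at h1
  simp at h1
  linarith [eps_lt_one hr]

include hr in
lemma F_mem_slitPlane (p : Nat.Primes) {α : ℂ} (hα : 0 < α.re) : F r p α ∈ slitPlane := by
  have := mem_slitPlane_of_norm_lt_one (lt_of_le_of_lt (norm_F_sub_one_lt hr p hα)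
    (eps_lt_one hr))
  simpa using this

include hr in
lemma norm_F_lower (p : Nat.Primes) {α : ℂ} (hα : 0 < α.re) :
    1 - (2 : ℝ) ^ (-r.re) ≤ ‖F r p α‖ := by
  have h1 := norm_F_sub_one_lt hr p hα
  have h2 : ‖(1 : ℂ)‖ - ‖F r p α‖ ≤ ‖(1 : ℂ) - F r p α‖ := norm_sub_norm_le _ _
  rw [norm_sub_rev] at h2
  simp only [norm_one] at h2
  linarith

include hr in
lemma summable_norm_F_sub_one {α : ℂ} (hα : 0 < α.re) :
    Summable fun p : Nat.Primes => ‖F r p α - 1‖ := by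
  refine ((summable_rpow_primes (by linarith : (1:ℝ) < 1 + 2 * r.re)).add
    (summable_rpow_primes (by linarith : (1:ℝ) < 1 + α.re + r.re))).of_nonneg_of_le
    (fun p => norm_nonneg _) (fun p => norm_F_sub_one_le p α)

include hr in
lemma summable_log_F {α : ℂ} (hα : 0 < α.re) :
    Summable fun p : Nat.Primes => Complex.log (F r p α) := by
  set ε := (2 : ℝ) ^ (-r.re) with hε
  have hε1 := eps_lt_one hr
  have hε0 := eps_pos (r := r)
  refine Summable.of_norm (((summable_norm_F_sub_one hr hα).mul_left
    (ε * (1 - ε)⁻¹ / 2 + 1)).of_nonneg_of_le (fun p => norm_nonneg _) (fun p => ?_))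
  set a := ‖F r p α - 1‖ with ha
  have ha0 : 0 ≤ a := norm_nonneg _
  have haε : a ≤ ε := norm_F_sub_one_lt hr p hα
  have hlt : a < 1 := lt_of_le_of_lt haε hε1
  have hlog : ‖Complex.log (F r p α)‖ ≤ a ^ 2 * (1 - a)⁻¹ / 2 + a := by
    have := Complex.norm_log_one_add_le (z := F r p α - 1) (by rwa [← ha])
    simpa using this
  refine hlog.trans ?_
  have h2 : (1 - a)⁻¹ ≤ (1 - ε)⁻¹ :=
    inv_anti₀ (by linarith) (by linarith)
  have h3 : a ^ 2 * (1 - a)⁻¹ ≤ (ε * a) * (1 - ε)⁻¹ := by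
    apply mul_le_mul (by nlinarith) h2 (by rw [inv_nonneg]; linarith) (by positivity)
  nlinarith [h3]

include hr in
lemma multipliable_F {α : ℂ} (hα : 0 < α.re) :
    Multipliable fun p : Nat.Primes => F r p α := by
  exact Complex.multipliable_of_summable_log (summable_log_F hr hα)

include hr in
lemma tprod_F_eq {α : ℂ} (hα : 0 < α.re) :
    (∏' p : Nat.Primes, F r p α) = Complex.exp (∑' p : Nat.Primes, Complex.log (F r p α)) := by
  exact (Complex.cexp_tsum_eq_tprod (fun p => F_ne_zero hr p hα) (summable_log_F hr hα)).symm

/-- The derivative of each factor's log. -/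
noncomputable def D (r : ℂ) (p : Nat.Primes) (α : ℂ) : ℂ :=
  ((p : ℕ) : ℂ) ^ (-(1 + α + r)) * Complex.log ((p : ℕ) : ℂ) / F r p α

include hr in
lemma hasDerivAt_log_F (p : Nat.Primes) {α : ℂ} (hα : 0 < α.re) :
    HasDerivAt (fun β => Complex.log (F r p β)) (D r p α) α := by
  have h1 : HasDerivAt (fun β : ℂ => -(1 + β + r)) (-1) α := by
    simpa using (((hasDerivAt_id' α).const_add (1 : ℂ)).add_const r).fun_neg
  have h2 := h1.const_cpow (c := ((p : ℕ) : ℂ))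
    (Or.inl (Nat.cast_ne_zero.mpr p.prop.pos.ne'))
  have h3 : HasDerivAt (fun β => F r p β)
      (((p : ℕ) : ℂ) ^ (-(1 + α + r)) * Complex.log ((p : ℕ) : ℂ)) α := by
    have h4 := ((hasDerivAt_const α (1 : ℂ)).fun_sub h2).add_const (((p : ℕ) : ℂ) ^ (-(1 + 2 * r)))
    exact h4.congr_deriv (by ring)
  exact h3.clog (F_mem_slitPlane hr p hα)

include hr in
lemma norm_D_le (p : Nat.Primes) {α : ℂ} (hα : 0 < α.re) :
    ‖D r p α‖ ≤ ((p : ℕ) : ℝ) ^ (-(1 + r.re)) * Real.log ((p : ℕ) : ℝ)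
      / (1 - (2 : ℝ) ^ (-r.re)) := by
  rw [D, norm_div, norm_mul, norm_p_cpow, norm_log_p]
  have hε1 := eps_lt_one hr
  refine div_le_div₀ (by positivity) ?_ (by linarith) (norm_F_lower hr p hα)
  apply mul_le_mul_of_nonneg_right _ (Real.log_natCast_nonneg _)
  refine Real.rpow_le_rpow_of_exponent_le (by linarith [two_le_p p]) ?_
  simp only [neg_re, add_re, one_re, neg_le_neg_iff]
  linarith

include hr in
lemma summable_bound : Summable fun p : Nat.Primes =>
    ((p : ℕ) : ℝ) ^ (-(1 + r.re)) * Real.log ((p : ℕ) : ℝ) / (1 - (2 : ℝ) ^ (-r.re)) := by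
  refine ((summable_log_mul_rpow (by linarith : (1:ℝ) < 1 + r.re)).div_const
    (1 - (2 : ℝ) ^ (-r.re))).congr fun p => ?_
  rw [mul_comm]

include hr in
lemma F_at_r (p : Nat.Primes) : F r p r = 1 := by
  rw [F, show -(1 + r + r) = -(1 + 2 * r) by ring]
  ring

include hr in
lemma hasDerivAt_G :
    HasDerivAt (fun α => ∑' p : Nat.Primes, Complex.log (F r p α))
      (∑' p : Nat.Primes, D r p r) r := by
  have hs_open : IsOpen {z : ℂ | 0 < z.re} := isOpen_lt continuous_const continuous_re
  refine hasDerivAt_of_tendstoUniformlyOn (f := fun (t : Finset Nat.Primes) α =>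
      ∑ p ∈ t, Complex.log (F r p α)) (f' := fun (t : Finset Nat.Primes) α => ∑ p ∈ t, D r p α) (l := atTop) (g' := fun α => ∑' p : Nat.Primes, D r p α)
      hs_open ?_ ?_ ?_ hr
  · exact tendstoUniformlyOn_tsum (summable_bound hr) (fun p α hα => norm_D_le hr p hα)
  · exact Eventually.of_forall fun t α hα =>
      HasDerivAt.fun_sum fun p _ => hasDerivAt_log_F hr p hα
  · exact fun α hα => (summable_log_F hr hα).hasSum

include hr in
lemma D_at_r (p : Nat.Primes) :
    D r p r = (Real.log ((p : ℕ) : ℝ) : ℂ) / ((p : ℕ) : ℂ) ^ ((1 : ℂ) + 2 * r) := by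
  rw [D, F_at_r hr, div_one, show -(1 + r + r) = -((1 : ℂ) + 2 * r) by ring,
    Complex.cpow_neg, ← Complex.natCast_log, div_eq_mul_inv]
  ring

include hr in
lemma deriv_tprod_F :
    deriv (fun α : ℂ => ∏' p : Nat.Primes, F r p α) r
      = ∑' p : Nat.Primes,
          (Real.log ((p : ℕ) : ℝ) : ℂ) / ((p : ℕ) : ℂ) ^ ((1 : ℂ) + 2 * r) := by
  have hs_open : IsOpen {z : ℂ | 0 < z.re} := isOpen_lt continuous_const continuous_re
  have heq : (fun α : ℂ => ∏' p : Nat.Primes, F r p α) =ᶠ[nhds r]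
      fun α => Complex.exp (∑' p : Nat.Primes, Complex.log (F r p α)) := by
    filter_upwards [hs_open.mem_nhds hr] with α hα using tprod_F_eq hr hα
  rw [heq.deriv_eq]
  have hG0 : (∑' p : Nat.Primes, Complex.log (F r p r)) = 0 := by
    have : ∀ p : Nat.Primes, Complex.log (F r p r) = 0 := fun p => by
      rw [F_at_r hr, Complex.log_one]
    simp [this]
  have hd := (hasDerivAt_G hr).cexp
  rw [hd.deriv, hG0, Complex.exp_zero, one_mul]
  exact tsum_congr fun p => D_at_r hr p

include hr in
lemma summable_part1 : Summable (fun p : Nat.Primes =>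
    ‖(Real.log ((p : ℕ) : ℝ) : ℂ) / ((p : ℕ) : ℂ) ^ ((1 : ℂ) + 2 * r)‖) := by
  refine (summable_log_mul_rpow (by linarith : (1:ℝ) < 1 + 2 * r.re)).congr fun p => ?_
  rw [norm_div, Complex.norm_real, Real.norm_eq_abs, _root_.abs_of_nonneg (Real.log_natCast_nonneg _),
    norm_natCast_cpow_of_pos p.prop.pos, show ((1 : ℂ) + 2 * r).re = 1 + 2 * r.re by simp,
    Real.rpow_neg (p_pos p).le, div_eq_mul_inv]

end main

end DLEPaux

theorem deriv_log_euler_product (r : ℂ) (hr : 0 < r.re) :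
    Summable (fun p : Nat.Primes =>
      ‖(Real.log ((p : ℕ) : ℝ) : ℂ) / ((p : ℕ) : ℂ) ^ ((1 : ℂ) + 2 * r)‖) ∧
    (∀ α : ℂ, 0 < α.re → Multipliable (fun p : Nat.Primes =>
      (1 : ℂ) - ((p : ℕ) : ℂ) ^ (-(1 + α + r)) + ((p : ℕ) : ℂ) ^ (-(1 + 2 * r)))) ∧
    deriv (fun α : ℂ => ∏' p : Nat.Primes,
        ((1 : ℂ) - ((p : ℕ) : ℂ) ^ (-(1 + α + r)) + ((p : ℕ) : ℂ) ^ (-(1 + 2 * r)))) r =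
      ∑' p : Nat.Primes,
        (Real.log ((p : ℕ) : ℝ) : ℂ) / ((p : ℕ) : ℂ) ^ ((1 : ℂ) + 2 * r) := by
  exact ⟨DLEPaux.summable_part1 hr, fun α hα => DLEPaux.multipliable_F hr hα,
    DLEPaux.deriv_tprod_F hr⟩
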